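/- arXiv:1503.04644 — 2 statements merged into one kernel-verified Lean document; each statement's English description precedes it below -/
import Mathlib

section
/- Let 0 ≤ β < 1 and let f(z) = z + ∑_{n≥2} a_n z^n be bi-univalent with inverse g = f⁻¹, such that Re f'(z) > β for all z ∈ 𝔻 and Re g'(w) > β for all w ∈ 𝔻. Then |a₃| ≤ 2(1−β)/3 and |2a₂² − a₃| ≤ 2(1−β)/3. -/
open MeasureTheory Set Metric Complex Filter intervalIntegral Real

noncomputable section

/-- The `n`-th MacLaurin coefficient of `f`, i.e. `f⁽ⁿ⁾(0)/n!`. -/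
def mc (f : ℂ → ℂ) (n : ℕ) : ℂ := iteratedDeriv n f 0 / (n.factorial : ℂ)

/-- The open unit disk in `ℂ`. -/
def unitDisk : Set ℂ := Metric.ball (0 : ℂ) 1

/-- `f` and `g` form a bi-univalent pair: `f` is analytic and injective on the unit disk with
`f 0 = 0`, `f' 0 = 1`, and `g` is the univalent analytic continuation of `f⁻¹` to the unit
disk: `g` is analytic and injective on the unit disk, `g 0 = 0`, and `f (g w) = w` for
`|w| < 1/4`. -/
def BiUnivalentPair (f g : ℂ → ℂ) : Prop :=
  AnalyticOnNhd ℂ f unitDisk ∧ f 0 = 0 ∧ deriv f 0 = 1 ∧ Set.InjOn f unitDisk ∧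
  AnalyticOnNhd ℂ g unitDisk ∧ Set.InjOn g unitDisk ∧ g 0 = 0 ∧
  ∀ w : ℂ, ‖w‖ < 1 / 4 → f (g w) = w

namespace BBetaAux

lemma analyticAt_deriv {f : ℂ → ℂ} {x : ℂ} (h : AnalyticAt ℂ f x) :
    AnalyticAt ℂ (deriv f) x := by
  obtain ⟨s, hsn, hs⟩ := h.exists_mem_nhds_analyticOnNhd
  exact hs.deriv x (mem_of_mem_nhds hsn)

lemma conj_intervalIntegral (u : ℝ → ℂ) (a b : ℝ) :
    (∫ θ in a..b, (starRingEnd ℂ) (u θ)) = (starRingEnd ℂ) (∫ θ in a..b, u θ) := by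
  rw [intervalIntegral_eq_integral_uIoc, intervalIntegral_eq_integral_uIoc, integral_conj]
  split_ifs <;> simp

lemma re_intervalIntegral {u : ℝ → ℂ} {a b : ℝ} (hu : IntervalIntegrable u volume a b) :
    (∫ θ in a..b, u θ).re = ∫ θ in a..b, (u θ).re := by
  simpa using (Complex.reCLM.intervalIntegral_comp_comm hu).symm

set_option maxHeartbeats 1000000 in
/-- Carathéodory-type coefficient bound at a fixed radius. -/
lemma carath_r {p : ℂ → ℂ} (hp : AnalyticOnNhd ℂ p (ball (0:ℂ) 1))
    (hre : ∀ z ∈ ball (0:ℂ) 1, 0 ≤ (p z).re) {n : ℕ} (hn : 0 < n)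
    {r : ℝ} (hr0 : 0 < r) (hr1 : r < 1) :
    ‖iteratedDeriv n p 0‖ ≤ 2 * n.factorial * (p 0).re / r ^ n := by
  have hπ := Real.pi_pos
  set E : ℝ → ℂ := circleMap 0 r with hE
  have hmemb : ∀ θ : ℝ, E θ ∈ ball (0:ℂ) 1 := by
    intro θ
    simp only [hE, mem_ball_zero_iff, norm_circleMap_zero]
    rwa [abs_of_pos hr0]
  have hne : ∀ θ : ℝ, E θ ≠ 0 := fun θ => circleMap_ne_center hr0.ne'
  have hEnorm : ∀ θ : ℝ, ‖E θ‖ = r := by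
    intro θ; simp only [hE, norm_circleMap_zero]; exact abs_of_pos hr0
  have hsub : closedBall (0:ℂ) r ⊆ ball (0:ℂ) 1 := closedBall_subset_ball hr1
  have hdiff : DifferentiableOn ℂ p (closedBall (0:ℂ) r) := fun z hz =>
    ((hp z (hsub hz)).differentiableAt).differentiableWithinAt
  have hqc : Continuous fun θ : ℝ => p (E θ) := by
    refine continuous_iff_continuousAt.2 fun θ => ?_
    exact ((hp _ (hmemb θ)).continuousAt).comp (continuous_circleMap 0 r).continuousAt
  have hEc : ∀ m : ℕ, Continuous fun θ : ℝ => ((E θ) ^ m)⁻¹ := fun m =>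
    ((continuous_circleMap 0 r).pow m).inv₀ fun θ => pow_ne_zero m (hne θ)
  have hps' := DifferentiableOn.hasFPowerSeriesOnBall (R := ⟨r, hr0.le⟩) hdiff
    (by exact_mod_cast hr0)
  have hps : HasFPowerSeriesOnBall p (cauchyPowerSeries p 0 r) 0 _ := hps'
  have hunfold : ∀ m : ℕ, (∮ z in C(0, r), ((1:ℂ)/(z - 0))^m • (z - 0)⁻¹ • p z)
      = I * ∫ θ in (0:ℝ)..2*π, ((E θ)^m)⁻¹ * p (E θ) := by
    intro m
    rw [circleIntegral, ← intervalIntegral.integral_const_mul]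
    refine intervalIntegral.integral_congr fun θ _ => ?_
    have h := hne θ
    simp only [deriv_circleMap, smul_eq_mul, sub_zero, one_div, inv_pow]
    simp only [hE] at h ⊢
    field_simp
  have hiter : ∀ m : ℕ, iteratedDeriv m p 0
      = (m.factorial : ℂ) * (cauchyPowerSeries p 0 r m fun _ => (1:ℂ)) := by
    intro m
    rw [iteratedDeriv_eq_iteratedFDeriv, ← hps.factorial_smul (1:ℂ) m, nsmul_eq_mul]
  have hA0 : (∫ θ in (0:ℝ)..2*π, p (E θ)) = ((2*π:ℝ) : ℂ) * p 0 := by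
    have h0 := (hps.coeff_zero fun _ => (1:ℂ)).symm
    rw [cauchyPowerSeries_apply, hunfold 0] at h0
    simp only [pow_zero, inv_one, one_mul, smul_eq_mul] at h0
    have hI := Complex.I_ne_zero
    have hπ' : (π:ℂ) ≠ 0 := Complex.ofReal_ne_zero.2 hπ.ne'
    field_simp at h0
    apply mul_left_cancel₀ hI
    push_cast
    linear_combination -I * h0
  have hzero : (∫ θ in (0:ℝ)..2*π, (E θ)^n * p (E θ)) = 0 := by
    obtain ⟨m, rfl⟩ : ∃ m, n = m + 1 := ⟨n - 1, (Nat.succ_pred_eq_of_pos hn).symm⟩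
    have hG : (∮ z in C(0, r), z^m * p z) = 0 := by
      refine Complex.circleIntegral_eq_zero_of_differentiable_on_off_countable hr0.le
        Set.countable_empty ?_ ?_
      · exact ((continuous_pow m).continuousOn).mul hdiff.continuousOn
      · intro z hz
        exact (differentiableAt_pow m).mul
          ((hp z (ball_subset_ball hr1.le hz.1)).differentiableAt)
    rw [circleIntegral] at hG
    have heq2 : (∫ θ in (0:ℝ)..2*π,
          deriv (circleMap 0 r) θ • ((circleMap 0 r θ)^m * p (circleMap 0 r θ)))
        = I * ∫ θ in (0:ℝ)..2*π, (E θ)^(m+1) * p (E θ) := by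
      rw [← intervalIntegral.integral_const_mul]
      refine intervalIntegral.integral_congr fun θ _ => ?_
      simp only [deriv_circleMap, smul_eq_mul, hE]
      ring
    rw [heq2] at hG
    exact (mul_eq_zero.1 hG).resolve_left Complex.I_ne_zero
  have hconjE : ∀ θ : ℝ, ((starRingEnd ℂ) (E θ))^n = ((r:ℂ)^2)^n * ((E θ)^n)⁻¹ := by
    intro θ
    have h1 : E θ * (starRingEnd ℂ) (E θ) = ((r:ℂ))^2 := by
      rw [Complex.mul_conj, Complex.normSq_eq_norm_sq, hEnorm θ]
      push_cast; ring
    have h2 : (starRingEnd ℂ) (E θ) = (r:ℂ)^2 * (E θ)⁻¹ := by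
      field_simp [hne θ]
      rw [mul_comm]; exact h1
    rw [h2, mul_pow, ← inv_pow]
  have hconjzero : (∫ θ in (0:ℝ)..2*π, ((E θ)^n)⁻¹ * (starRingEnd ℂ) (p (E θ))) = 0 := by
    have h1 : (∫ θ in (0:ℝ)..2*π, (starRingEnd ℂ) ((E θ)^n * p (E θ))) = 0 := by
      rw [conj_intervalIntegral, hzero]; simp
    have h2 : (∫ θ in (0:ℝ)..2*π, (starRingEnd ℂ) ((E θ)^n * p (E θ)))
        = ((r:ℂ)^2)^n * ∫ θ in (0:ℝ)..2*π, ((E θ)^n)⁻¹ * (starRingEnd ℂ) (p (E θ)) := by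
      rw [← intervalIntegral.integral_const_mul]
      refine intervalIntegral.integral_congr fun θ _ => ?_
      rw [map_mul, map_pow, hconjE θ]
      ring
    rw [h2] at h1
    have hr2 : ((r:ℂ)^2)^n ≠ 0 :=
      pow_ne_zero _ (pow_ne_zero _ (Complex.ofReal_ne_zero.2 hr0.ne'))
    exact (mul_eq_zero.1 h1).resolve_left hr2
  set Mn : ℂ := ∫ θ in (0:ℝ)..2*π, ((E θ)^n)⁻¹ * p (E θ) with hMn
  have hint1 : IntervalIntegrable (fun θ => ((E θ)^n)⁻¹ * p (E θ)) volume 0 (2*π) :=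
    ((hEc n).mul hqc).intervalIntegrable _ _
  have hint2 : IntervalIntegrable (fun θ => ((E θ)^n)⁻¹ * (starRingEnd ℂ) (p (E θ)))
      volume 0 (2*π) :=
    ((hEc n).mul (Complex.continuous_conj.comp hqc)).intervalIntegrable _ _
  have hMn2 : Mn = ∫ θ in (0:ℝ)..2*π, ((E θ)^n)⁻¹ * ((2 * (p (E θ)).re : ℝ) : ℂ) := by
    rw [hMn, ← add_zero (∫ θ in (0:ℝ)..2*π, ((E θ)^n)⁻¹ * p (E θ)), ← hconjzero,
      ← intervalIntegral.integral_add hint1 hint2]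
    refine intervalIntegral.integral_congr fun θ _ => ?_
    rw [← mul_add, Complex.add_conj]
  have hnorm : ‖Mn‖ ≤ (r^n)⁻¹ * (2 * (2*π * (p 0).re)) := by
    rw [hMn2]
    refine le_trans (intervalIntegral.norm_integral_le_integral_norm Real.two_pi_pos.le) ?_
    have heq : (∫ θ in (0:ℝ)..2*π, ‖((E θ)^n)⁻¹ * ((2 * (p (E θ)).re : ℝ) : ℂ)‖)
        = ∫ θ in (0:ℝ)..2*π, (r^n)⁻¹ * (2 * (p (E θ)).re) := by
      refine intervalIntegral.integral_congr fun θ _ => ?_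
      simp only [norm_mul, norm_inv, norm_pow, hEnorm θ,
        Complex.norm_real, Real.norm_eq_abs]
      rw [_root_.abs_of_nonneg (by have := hre _ (hmemb θ); positivity)]
      rw [_root_.abs_of_nonneg (hre _ (hmemb θ))]
    rw [heq, intervalIntegral.integral_const_mul]
    have hre2 : (∫ θ in (0:ℝ)..2*π, 2 * (p (E θ)).re) = 2 * (2*π * (p 0).re) := by
      rw [intervalIntegral.integral_const_mul, ← re_intervalIntegral
        (hqc.intervalIntegrable _ _), hA0]
      rw [Complex.re_ofReal_mul]
    rw [hre2]
  have habs : ‖iteratedDeriv n p 0‖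
      = (n.factorial : ℝ) * ((2*π)⁻¹ * ‖Mn‖) := by
    rw [hiter n, cauchyPowerSeries_apply, hunfold n, ← hMn, smul_eq_mul]
    simp only [norm_mul, norm_inv, Complex.norm_I, Complex.norm_natCast, Complex.norm_real,
      Complex.norm_two, Real.norm_eq_abs]
    rw [_root_.abs_of_pos hπ]
    ring
  rw [habs]
  have hfin : (n.factorial:ℝ) * ((2*π)⁻¹ * ((r^n)⁻¹ * (2 * (2*π * (p 0).re))))
      = 2*n.factorial*(p 0).re / r^n := by
    field_simp
  rw [← hfin]
  have h1 : (0:ℝ) ≤ (n.factorial:ℝ) := Nat.cast_nonneg _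
  have h2 : (0:ℝ) ≤ (2*π)⁻¹ := by positivity
  exact mul_le_mul_of_nonneg_left (mul_le_mul_of_nonneg_left hnorm h2) h1

/-- Carathéodory-type coefficient bound. -/
lemma carath {p : ℂ → ℂ} (hp : AnalyticOnNhd ℂ p (ball (0:ℂ) 1))
    (hre : ∀ z ∈ ball (0:ℂ) 1, 0 ≤ (p z).re) {n : ℕ} (hn : 0 < n) :
    ‖iteratedDeriv n p 0‖ ≤ 2 * n.factorial * (p 0).re := by
  have h1 : Tendsto (fun r : ℝ => 2 * (n.factorial : ℝ) * (p 0).re / r ^ n)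
      (nhdsWithin 1 (Set.Iio 1)) (nhds (2 * n.factorial * (p 0).re)) := by
    have hc : ContinuousAt (fun r : ℝ => 2 * (n.factorial : ℝ) * (p 0).re / r ^ n) 1 := by
      apply ContinuousAt.div continuousAt_const (continuousAt_pow _ _)
      norm_num
    have := hc.continuousWithinAt (s := Set.Iio (1:ℝ))
    simpa using this.tendsto
  refine ge_of_tendsto h1 ?_
  filter_upwards [Ioo_mem_nhdsLT_of_mem (by norm_num : (1:ℝ) ∈ Set.Ioc 0 1)] with r hr
  exact carath_r hp hre hn hr.1 hr.2

/-- Carathéodory bound for the second coefficient in shifted form. -/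
lemma carath2 {u : ℂ → ℂ} (hu : AnalyticOnNhd ℂ u (ball (0:ℂ) 1)) {β : ℝ} (hβ1 : β < 1)
    (hre : ∀ z ∈ ball (0:ℂ) 1, β < (u z).re) (hu0 : u 0 = 1) :
    ‖iteratedDeriv 2 u 0‖ ≤ 4 * (1 - β) := by
  have hc1 : (0:ℝ) < 1 - β := by linarith
  have hc0 : (1 - β : ℝ) ≠ 0 := hc1.ne'
  set p : ℂ → ℂ := fun z => ((1 - β : ℝ) : ℂ)⁻¹ * (u z - (β:ℝ)) with hpdef
  have hp : AnalyticOnNhd ℂ p (ball (0:ℂ) 1) := fun z hz =>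
    analyticAt_const.mul ((hu z hz).sub analyticAt_const)
  have hre' : ∀ z ∈ ball (0:ℂ) 1, 0 ≤ (p z).re := by
    intro z hz
    have h1 := hre z hz
    simp only [hpdef, ← Complex.ofReal_inv, Complex.re_ofReal_mul, Complex.sub_re,
      Complex.ofReal_re]
    have h2 : (0:ℝ) ≤ (1-β)⁻¹ := by positivity
    apply mul_nonneg h2 (by linarith)
  have hp0 : (p 0).re = 1 := by
    have h3 : p 0 = 1 := by
      simp only [hpdef, hu0]
      rw [show (1:ℂ) - (β:ℝ) = ((1-β:ℝ):ℂ) by push_cast; ring]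
      exact inv_mul_cancel₀ (by exact_mod_cast hc0)
    rw [h3]; simp
  have h0mem : (0:ℂ) ∈ ball (0:ℂ) 1 := mem_ball_self one_pos
  have hu0' : AnalyticAt ℂ u 0 := hu 0 h0mem
  have hd1 : deriv p =ᶠ[nhds (0:ℂ)] fun z => ((1 - β : ℝ) : ℂ)⁻¹ * deriv u z := by
    filter_upwards [hu0'.eventually_analyticAt] with z hz
    simp only [hpdef]
    rw [deriv_const_mul _ (hz.differentiableAt.sub_const _), deriv_sub_const]
  have hiter2 : iteratedDeriv 2 p 0 = ((1 - β : ℝ) : ℂ)⁻¹ * iteratedDeriv 2 u 0 := by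
    rw [show (2:ℕ) = 1+1 from rfl, iteratedDeriv_succ, iteratedDeriv_one,
      iteratedDeriv_succ, iteratedDeriv_one]
    rw [hd1.deriv_eq]
    exact deriv_const_mul _ (analyticAt_deriv hu0').differentiableAt
  have hb := carath hp hre' (by norm_num : 0 < 2)
  rw [hiter2, hp0, norm_mul, norm_inv, Complex.norm_real, Real.norm_eq_abs,
    _root_.abs_of_pos hc1] at hb
  calc ‖iteratedDeriv 2 u 0‖
      = (1-β) * ((1-β)⁻¹ * ‖iteratedDeriv 2 u 0‖) := by field_simp
    _ ≤ (1-β) * (2 * Nat.factorial 2 * 1) := mul_le_mul_of_nonneg_left hb hc1.le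
    _ = 4 * (1 - β) := by norm_num [Nat.factorial]; ring

end BBetaAux

open BBetaAux

/-- Corollary 2.2, bounds for `|a₃|` and `|2a₂² - a₃|` in the class `B(β)` of
Srivastava et al. -/
theorem B_beta_a3_bounds (β : ℝ) (hβ0 : 0 ≤ β) (hβ1 : β < 1) (f g : ℂ → ℂ)
    (hfg : BiUnivalentPair f g)
    (hf : ∀ z ∈ unitDisk, β < (deriv f z).re)
    (hg : ∀ w ∈ unitDisk, β < (deriv g w).re) :
    ‖mc f 3‖ ≤ 2 * (1 - β) / 3 ∧
      ‖2 * mc f 2 ^ 2 - mc f 3‖ ≤ 2 * (1 - β) / 3 := by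
  obtain ⟨hfa, hf0, hf1, hfInj, hga, hgInj, hg0, hfg_inv⟩ := hfg
  have hUD : unitDisk = ball (0:ℂ) 1 := rfl
  rw [hUD] at hfa hga hf hg
  have h0mem : (0:ℂ) ∈ ball (0:ℂ) 1 := mem_ball_self one_pos
  have hga0 : AnalyticAt ℂ g 0 := hga 0 h0mem
  have hgmem : ∀ᶠ w in nhds (0:ℂ), g w ∈ ball (0:ℂ) 1 := by
    have hc : ContinuousAt g 0 := hga0.continuousAt
    have hmem : ball (0:ℂ) 1 ∈ nhds (g 0) := by
      rw [hg0]; exact isOpen_ball.mem_nhds h0mem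
    exact hc.eventually_mem hmem
  have hgA : ∀ᶠ w in nhds (0:ℂ), AnalyticAt ℂ g w := hga0.eventually_analyticAt
  have hfA : ∀ᶠ w in nhds (0:ℂ), AnalyticAt ℂ f (g w) := hgmem.mono fun w hw => hfa _ hw
  have hfA1 : ∀ᶠ w in nhds (0:ℂ), AnalyticAt ℂ (deriv f) (g w) :=
    hfA.mono fun w hw => analyticAt_deriv hw
  have hfA2 : ∀ᶠ w in nhds (0:ℂ), AnalyticAt ℂ (deriv (deriv f)) (g w) :=
    hfA1.mono fun w hw => analyticAt_deriv hw
  have hgA1 : ∀ᶠ w in nhds (0:ℂ), AnalyticAt ℂ (deriv g) w :=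
    hgA.mono fun w hw => analyticAt_deriv hw
  have E0 : (fun w => f (g w)) =ᶠ[nhds (0:ℂ)] fun w => w := by
    filter_upwards [ball_mem_nhds (0:ℂ) (by norm_num : (0:ℝ) < 1/4)] with w hw
    exact hfg_inv w (by simpa [mem_ball_zero_iff] using hw)
  have E1 : (fun w => deriv f (g w) * deriv g w) =ᶠ[nhds (0:ℂ)] fun _ => (1:ℂ) := by
    filter_upwards [E0.deriv, hgA, hfA] with w hDw hgw hfw
    have hcomp : deriv (fun x => f (g x)) w = deriv f (g w) * deriv g w := by
      have h := deriv_comp w hfw.differentiableAt hgw.differentiableAt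
      simpa [Function.comp_def] using h
    rw [← hcomp, hDw, deriv_id'']
  have hg1 : deriv g 0 = 1 := by
    have h := E1.self_of_nhds
    simp only [hg0, hf1, one_mul] at h
    exact h
  have E2 : (fun w => deriv (deriv f) (g w) * deriv g w * deriv g w
      + deriv f (g w) * deriv (deriv g) w) =ᶠ[nhds (0:ℂ)] fun _ => (0:ℂ) := by
    filter_upwards [E1.deriv, hgA, hgA1, hfA1, hfA2] with w hDw hgw hg1w hf1w hf2w
    have d1 : DifferentiableAt ℂ (fun x => deriv f (g x)) w :=
      (hf1w.differentiableAt).comp w hgw.differentiableAt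
    have d2 : DifferentiableAt ℂ (deriv g) w := hg1w.differentiableAt
    have hmul : deriv (fun x => deriv f (g x) * deriv g x) w
        = deriv (fun x => deriv f (g x)) w * deriv g w + deriv f (g w) * deriv (deriv g) w :=
      deriv_mul d1 d2
    have hcomp : deriv (fun x => deriv f (g x)) w = deriv (deriv f) (g w) * deriv g w := by
      have h := deriv_comp w hf1w.differentiableAt hgw.differentiableAt
      simpa [Function.comp_def] using h
    have h := hDw
    rw [hmul, hcomp] at h
    exact h.trans (by simp)
  have hg2 : deriv (deriv g) 0 = - deriv (deriv f) 0 := by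
    have h := E2.self_of_nhds
    simp only [hg0, hg1, hf1, mul_one, one_mul] at h
    linear_combination h
  have E3 : deriv (fun w => deriv (deriv f) (g w) * deriv g w * deriv g w
      + deriv f (g w) * deriv (deriv g) w) 0 = 0 := by
    rw [E2.deriv_eq]; exact deriv_const 0 0
  have dg : DifferentiableAt ℂ g 0 := hga0.differentiableAt
  have dg1 : DifferentiableAt ℂ (deriv g) 0 := (analyticAt_deriv hga0).differentiableAt
  have dg2 : DifferentiableAt ℂ (deriv (deriv g)) 0 :=
    (analyticAt_deriv (analyticAt_deriv hga0)).differentiableAt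
  have hf0' : AnalyticAt ℂ (deriv f) 0 := analyticAt_deriv (hfa 0 h0mem)
  have hf0'' : AnalyticAt ℂ (deriv (deriv f)) 0 := analyticAt_deriv hf0'
  have df1g : DifferentiableAt ℂ (deriv f) (g 0) := by
    rw [hg0]; exact hf0'.differentiableAt
  have df2g : DifferentiableAt ℂ (deriv (deriv f)) (g 0) := by
    rw [hg0]; exact hf0''.differentiableAt
  have c1 : DifferentiableAt ℂ (fun x => deriv f (g x)) 0 := df1g.comp 0 dg
  have c2 : DifferentiableAt ℂ (fun x => deriv (deriv f) (g x)) 0 := df2g.comp 0 dg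
  have hder_c2 : deriv (fun x => deriv (deriv f) (g x)) 0
      = deriv (deriv (deriv f)) 0 * deriv g 0 := by
    have h := deriv_comp 0 df2g dg
    simpa [Function.comp_def, hg0] using h
  have hder_c1 : deriv (fun x => deriv f (g x)) 0 = deriv (deriv f) 0 * deriv g 0 := by
    have h := deriv_comp 0 df1g dg
    simpa [Function.comp_def, hg0] using h
  have hE3' : deriv (fun w => deriv (deriv f) (g w) * deriv g w * deriv g w) 0
      + deriv (fun w => deriv f (g w) * deriv (deriv g) w) 0 = 0 := by
    rw [← deriv_fun_add ((c2.fun_mul dg1).fun_mul dg1) (c1.fun_mul dg2)]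
    exact E3
  rw [deriv_fun_mul (c2.fun_mul dg1) dg1, deriv_fun_mul c2 dg1, hder_c2, deriv_fun_mul c1 dg2,
    hder_c1] at hE3'
  have hg3 : deriv (deriv (deriv g)) 0
      = 3 * (deriv (deriv f) 0)^2 - deriv (deriv (deriv f)) 0 := by
    simp only [hg0, hg1, hf1, hg2, mul_one, one_mul] at hE3'
    linear_combination hE3'
  -- coefficient bounds via Carathéodory
  have hfb : ‖iteratedDeriv 2 (deriv f) 0‖ ≤ 4 * (1 - β) :=
    carath2 hfa.deriv hβ1 hf hf1
  have hgb : ‖iteratedDeriv 2 (deriv g) 0‖ ≤ 4 * (1 - β) :=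
    carath2 hga.deriv hβ1 hg hg1
  have hcf3 : iteratedDeriv 2 (deriv f) 0 = deriv (deriv (deriv f)) 0 := by
    rw [show (2:ℕ) = 1+1 from rfl, iteratedDeriv_succ', iteratedDeriv_one]
  have hcg3 : iteratedDeriv 2 (deriv g) 0 = deriv (deriv (deriv g)) 0 := by
    rw [show (2:ℕ) = 1+1 from rfl, iteratedDeriv_succ', iteratedDeriv_one]
  have hf3eq : iteratedDeriv 3 f 0 = deriv (deriv (deriv f)) 0 := by
    rw [show (3:ℕ) = 2+1 from rfl, iteratedDeriv_succ', ← hcf3]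
  have hg3eq : iteratedDeriv 3 g 0 = deriv (deriv (deriv g)) 0 := by
    rw [show (3:ℕ) = 2+1 from rfl, iteratedDeriv_succ', ← hcg3]
  have hf2eq : iteratedDeriv 2 f 0 = deriv (deriv f) 0 := by
    rw [show (2:ℕ) = 1+1 from rfl, iteratedDeriv_succ', iteratedDeriv_one]
  rw [hcf3] at hfb
  rw [hcg3] at hgb
  constructor
  · have habs : ‖mc f 3‖ = ‖deriv (deriv (deriv f)) 0‖ / 6 := by
      rw [mc, hf3eq, norm_div]
      norm_num [Nat.factorial]
    rw [habs]
    linarith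
  · have hkey : 2 * mc f 2 ^ 2 - mc f 3 = deriv (deriv (deriv g)) 0 / 6 := by
      rw [mc, mc, hf2eq, hf3eq, hg3]
      have h2 : ((Nat.factorial 2 : ℕ) : ℂ) = 2 := by norm_num [Nat.factorial]
      have h6 : ((Nat.factorial 3 : ℕ) : ℂ) = 6 := by norm_num [Nat.factorial]
      rw [h2, h6]
      ring
    rw [hkey, norm_div]
    have : ‖(6:ℂ)‖ = 6 := by norm_num
    rw [this]
    linarith
end
end

section
/- Let m ≥ 2, 0 ≤ β < 1, α ∈ ℂ with α ≠ −1, let k(z) = z + ∑_{n≥2} k_n z^n be bi-univalent with k₂ ≠ 0, k₃ ≠ 0 and 2(1+2α)k₃ − (1+3α)k₂² ≠ 0, and let f(z) = z + ∑_{n≥2} a_n z^n belong to the class BV^k(m; α, β). Then |a₂| ≤ min{ √( m(1−β)/|2(1+2α)k₃ − (1+3α)k₂²| ) , m(1−β)/(|1+α| |k₂|) }. -/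
open MeasureTheory Set Metric Complex
open Filter Topology

noncomputable section

lemma aux_ofScalars_coeff (c : ℕ → ℂ) (n : ℕ) :
    (FormalMultilinearSeries.ofScalars ℂ c).coeff n = c n := by
  have h := FormalMultilinearSeries.ofScalars_apply_eq (E := ℂ) c (1 : ℂ) n
  have h2 := FormalMultilinearSeries.apply_eq_pow_smul_coeff
    (p := FormalMultilinearSeries.ofScalars ℂ c) (n := n) (z := (1:ℂ))
  simp only [one_pow, one_smul, smul_eq_mul, mul_one] at h h2
  rw [← h, h2, one_mul]

lemma aux_radius_ge_one {c : ℕ → ℂ}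
    (h : ∀ z ∈ Metric.ball (0:ℂ) 1, Summable fun n => c n * z ^ n) :
    1 ≤ (FormalMultilinearSeries.ofScalars ℂ c).radius := by
  refine ENNReal.le_of_forall_nnreal_lt fun r hr => ?_
  have hr1 : (r:ℝ) < 1 := by exact_mod_cast hr
  have hz : ((r:ℝ):ℂ) ∈ Metric.ball (0:ℂ) 1 := by
    simp only [Metric.mem_ball, dist_zero_right, Complex.norm_real, Real.norm_eq_abs,
      _root_.abs_of_nonneg r.coe_nonneg]
    exact hr1
  have ht : Tendsto (fun n => ‖c n * ((r:ℝ):ℂ) ^ n‖) atTop (𝓝 0) := by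
    simpa using ((h _ hz).tendsto_atTop_zero).norm
  obtain ⟨C, hC⟩ := ht.bddAbove_range
  refine (FormalMultilinearSeries.ofScalars ℂ c).le_radius_of_bound C fun n => ?_
  have h1 : ‖c n * ((r:ℝ):ℂ) ^ n‖ ≤ C := hC (Set.mem_range_self n)
  calc ‖FormalMultilinearSeries.ofScalars ℂ c n‖ * (r:ℝ) ^ n
      = ‖c n‖ * (r:ℝ) ^ n := by rw [FormalMultilinearSeries.ofScalars_norm]
    _ = ‖c n * ((r:ℝ):ℂ) ^ n‖ := by
        rw [norm_mul, norm_pow, Complex.norm_real, Real.norm_eq_abs,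
          _root_.abs_of_nonneg r.coe_nonneg]
    _ ≤ C := h1

lemma aux_hasFPS {c : ℕ → ℂ}
    (h : ∀ z ∈ Metric.ball (0:ℂ) 1, Summable fun n => c n * z ^ n) :
    HasFPowerSeriesOnBall (fun z => ∑' n, c n * z ^ n)
      (FormalMultilinearSeries.ofScalars ℂ c) 0 1 := by
  refine ⟨aux_radius_ge_one h, one_pos, fun {y} hy => ?_⟩
  have hy' : y ∈ Metric.ball (0:ℂ) 1 := by
    simp only [EMetric.mem_ball, edist_zero_right] at hy
    simp only [Metric.mem_ball, dist_zero_right]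
    rwa [← ofReal_norm, ENNReal.ofReal_lt_one] at hy
  have hs := (h y hy').hasSum
  simp only [zero_add]
  convert hs using 3 with n
  case e'_3 => rfl
  rw [FormalMultilinearSeries.apply_eq_pow_smul_coeff, aux_ofScalars_coeff,
    smul_eq_mul, mul_comm]

lemma aux_iteratedDeriv {F : ℂ → ℂ} {p : FormalMultilinearSeries ℂ ℂ ℂ} {r : ENNReal}
    (h : HasFPowerSeriesOnBall F p 0 r) (n : ℕ) :
    iteratedDeriv n F 0 = (n.factorial : ℂ) * p.coeff n := by
  have h1 := h.factorial_smul (1 : ℂ) n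
  rw [iteratedDeriv, ← h1, FormalMultilinearSeries.apply_eq_pow_smul_coeff]
  simp [nsmul_eq_mul]

lemma aux_mc_eq {c : ℕ → ℂ} {F : ℂ → ℂ}
    (h : HasFPowerSeriesOnBall F (FormalMultilinearSeries.ofScalars ℂ c) 0 1) (n : ℕ) :
    mc F n = c n := by
  rw [mc, aux_iteratedDeriv h n, aux_ofScalars_coeff, mul_div_cancel_left₀]
  exact_mod_cast n.factorial_ne_zero

lemma aux_mc_congr {f g : ℂ → ℂ} (h : f =ᶠ[𝓝 (0:ℂ)] g) (n : ℕ) : mc f n = mc g n := by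
  unfold mc
  congr 1
  induction n generalizing f g with
  | zero => simpa using h.self_of_nhds
  | succ n ih =>
    rw [iteratedDeriv_succ', iteratedDeriv_succ']
    exact ih h.deriv

lemma aux_eball : Metric.eball (0:ℂ) 1 = Metric.ball (0:ℂ) 1 := by
  rw [show (1:ENNReal) = ((1:NNReal):ENNReal) from rfl, Metric.emetric_ball_nnreal]
  norm_num


/-- The kernel `(1 - z e^{it})/(1 + z e^{it})`. -/
def pmKernel (z : ℂ) (t : ℝ) : ℂ :=
  (1 - z * Complex.exp (t * Complex.I)) / (1 + z * Complex.exp (t * Complex.I))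

/-- The class `P_m` of functions with bounded boundary rotation: `p` is analytic on the unit
disk, `p 0 = 1`, and `p` is represented against a finite signed Borel measure
`μ = μp - μn` on `[0, 2π]` with `μ([0,2π]) = 1` and total variation `‖μ‖ ≤ m/2`. -/
def MemPm (m : ℝ) (p : ℂ → ℂ) : Prop :=
  AnalyticOnNhd ℂ p unitDisk ∧ p 0 = 1 ∧
  ∃ μp μn : Measure ℝ, IsFiniteMeasure μp ∧ IsFiniteMeasure μn ∧
    (μp (Set.Icc 0 (2 * Real.pi))).toReal - (μn (Set.Icc 0 (2 * Real.pi))).toReal = 1 ∧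
    (μp (Set.Icc 0 (2 * Real.pi))).toReal + (μn (Set.Icc 0 (2 * Real.pi))).toReal ≤ m / 2 ∧
    ∀ z ∈ unitDisk, p z =
      (∫ t in Set.Icc 0 (2 * Real.pi), pmKernel z t ∂μp) -
      (∫ t in Set.Icc 0 (2 * Real.pi), pmKernel z t ∂μn)

/-- `p ∈ P_m(β)` iff `p = β + (1 - β) q` on the unit disk for some `q ∈ P_m`. -/
def MemPmBeta (m β : ℝ) (p : ℂ → ℂ) : Prop :=
  ∃ q : ℂ → ℂ, MemPm m q ∧ ∀ z ∈ unitDisk, p z = (β : ℂ) + (1 - (β : ℂ)) * q z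

lemma aux_exp_abs (t : ℝ) : ‖Complex.exp (t * Complex.I)‖ = 1 := by
  rw [Complex.norm_exp]
  simp

lemma aux_den_lb {z : ℂ} (hz : ‖z‖ < 3/4) (t : ℝ) :
    (1:ℝ)/4 ≤ ‖1 + z * Complex.exp (t * Complex.I)‖ := by
  have h1 : ‖z * Complex.exp (t * Complex.I)‖ < 3/4 := by
    rw [norm_mul, aux_exp_abs, mul_one]; exact hz
  have h2 : ‖(1:ℂ)‖ - ‖-(z * Complex.exp (t * Complex.I))‖ ≤
      ‖(1:ℂ) - -(z * Complex.exp (t * Complex.I))‖ := norm_sub_norm_le _ _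
  rw [sub_neg_eq_add, norm_neg] at h2
  simp only [norm_one] at h2
  linarith

lemma aux_den_ne {z : ℂ} (hz : ‖z‖ < 3/4) (t : ℝ) :
    (1 + z * Complex.exp (t * Complex.I)) ≠ 0 := by
  intro h
  have := aux_den_lb hz t
  rw [h] at this
  simp at this
  linarith

lemma aux_kder {z : ℂ} (hz : ‖z‖ < 3/4) (t : ℝ) :
    HasDerivAt (fun z => pmKernel z t)
      (-2 * Complex.exp (t * Complex.I) / (1 + z * Complex.exp (t * Complex.I)) ^ 2) z := by
  have hden := aux_den_ne hz t
  have h1 : HasDerivAt (fun z : ℂ => 1 - z * Complex.exp (t * Complex.I))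
      (-(Complex.exp (t * Complex.I))) z := by
    simpa using ((hasDerivAt_id z).mul_const (Complex.exp (t * Complex.I))).const_sub 1
  have h2 : HasDerivAt (fun z : ℂ => 1 + z * Complex.exp (t * Complex.I))
      (Complex.exp (t * Complex.I)) z := by
    simpa using ((hasDerivAt_id z).mul_const (Complex.exp (t * Complex.I))).const_add 1
  have h3 := h1.div h2 hden
  refine h3.congr_deriv ?_
  field_simp
  ring

lemma aux_k1der {z : ℂ} (hz : ‖z‖ < 3/4) (t : ℝ) :
    HasDerivAt (fun z => -2 * Complex.exp (t * Complex.I) /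
        (1 + z * Complex.exp (t * Complex.I)) ^ 2)
      (4 * Complex.exp (t * Complex.I) ^ 2 / (1 + z * Complex.exp (t * Complex.I)) ^ 3) z := by
  have hden := aux_den_ne hz t
  have h2 : HasDerivAt (fun z : ℂ => 1 + z * Complex.exp (t * Complex.I))
      (Complex.exp (t * Complex.I)) z := by
    simpa using ((hasDerivAt_id z).mul_const (Complex.exp (t * Complex.I))).const_add 1
  have h3 := (hasDerivAt_const z (-2 * Complex.exp (t * Complex.I))).div (h2.pow 2) (pow_ne_zero 2 hden)
  refine h3.congr_deriv ?_
  simp only [Pi.pow_apply]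
  field_simp
  ring

lemma aux_cont_pm {z : ℂ} (hz : ‖z‖ < 3/4) : Continuous fun t : ℝ => pmKernel z t := by
  have hc : Continuous fun t : ℝ => Complex.exp (t * Complex.I) :=
    (Complex.continuous_ofReal.mul continuous_const).cexp
  exact (continuous_const.sub (continuous_const.mul hc)).div
    (continuous_const.add (continuous_const.mul hc)) fun t => aux_den_ne hz t

lemma aux_cont_k1 {z : ℂ} (hz : ‖z‖ < 3/4) :
    Continuous fun t : ℝ => -2 * Complex.exp (t * Complex.I) /
      (1 + z * Complex.exp (t * Complex.I)) ^ 2 := by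
  have hc : Continuous fun t : ℝ => Complex.exp (t * Complex.I) :=
    (Complex.continuous_ofReal.mul continuous_const).cexp
  exact (continuous_const.mul hc).div
    ((continuous_const.add (continuous_const.mul hc)).pow 2)
    fun t => pow_ne_zero 2 (aux_den_ne hz t)

lemma aux_bound_pm {z : ℂ} (hz : ‖z‖ < 3/4) (t : ℝ) : ‖pmKernel z t‖ ≤ 8 := by
  rw [pmKernel, norm_div]
  have h1 : ‖1 - z * Complex.exp (t * Complex.I)‖ ≤ 2 := by
    refine (norm_sub_le _ _).trans ?_
    rw [norm_one, norm_mul]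
    simp only [aux_exp_abs, mul_one]
    linarith
  have h2 : (1:ℝ)/4 ≤ ‖1 + z * Complex.exp (t * Complex.I)‖ := aux_den_lb hz t
  calc ‖1 - z * Complex.exp (t * Complex.I)‖ / ‖1 + z * Complex.exp (t * Complex.I)‖
      ≤ 2 / (1/4) := by gcongr
    _ = 8 := by norm_num

lemma aux_bound_k1 {z : ℂ} (hz : ‖z‖ < 3/4) (t : ℝ) :
    ‖-2 * Complex.exp (t * Complex.I) / (1 + z * Complex.exp (t * Complex.I)) ^ 2‖ ≤ 32 := by
  rw [norm_div, norm_pow]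
  have h1 : ‖-2 * Complex.exp (t * Complex.I)‖ = 2 := by
    rw [norm_mul]
    simp [aux_exp_abs]
  have h2 : (1:ℝ)/4 ≤ ‖1 + z * Complex.exp (t * Complex.I)‖ := aux_den_lb hz t
  rw [h1]
  calc (2:ℝ) / ‖1 + z * Complex.exp (t * Complex.I)‖ ^ 2
      ≤ 2 / (1/4) ^ 2 := by gcongr
    _ = 32 := by norm_num

lemma aux_bound_k2 {z : ℂ} (hz : ‖z‖ < 3/4) (t : ℝ) :
    ‖4 * Complex.exp (t * Complex.I) ^ 2 / (1 + z * Complex.exp (t * Complex.I)) ^ 3‖ ≤ 256 := by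
  rw [norm_div, norm_pow]
  have h1 : ‖4 * Complex.exp (t * Complex.I) ^ 2‖ = 4 := by
    rw [norm_mul, norm_pow]
    simp [aux_exp_abs]
  have h2 : (1:ℝ)/4 ≤ ‖1 + z * Complex.exp (t * Complex.I)‖ := aux_den_lb hz t
  rw [h1]
  calc (4:ℝ) / ‖1 + z * Complex.exp (t * Complex.I)‖ ^ 3
      ≤ 4 / (1/4) ^ 3 := by gcongr
    _ = 256 := by norm_num

lemma aux_small {z₀ x : ℂ} (hz : ‖z₀‖ < 1/2) (hx : x ∈ Metric.ball z₀ (1/4)) :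
    ‖x‖ < 3/4 := by
  rw [Metric.mem_ball, Complex.dist_eq] at hx
  calc ‖x‖ = ‖x - z₀ + z₀‖ := by ring_nf
    _ ≤ ‖x - z₀‖ + ‖z₀‖ := norm_add_le _ _
    _ < 1/4 + 1/2 := by linarith
    _ = 3/4 := by norm_num

lemma aux_Ider (μ : Measure ℝ) [IsFiniteMeasure μ] {z₀ : ℂ} (hz : ‖z₀‖ < 1/2) :
    HasDerivAt (fun z => ∫ t in Set.Icc 0 (2 * Real.pi), pmKernel z t ∂μ)
      (∫ t in Set.Icc 0 (2 * Real.pi),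
        -2 * Complex.exp (t * Complex.I) / (1 + z₀ * Complex.exp (t * Complex.I)) ^ 2 ∂μ) z₀ := by
  have hz34 : ‖z₀‖ < 3/4 := by linarith
  refine (hasDerivAt_integral_of_dominated_loc_of_deriv_le (s := Metric.ball z₀ (1/4))
    (μ := μ.restrict (Set.Icc 0 (2 * Real.pi))) (x₀ := z₀)
    (F := fun z t => pmKernel z t)
    (F' := fun x t => -2 * Complex.exp (t * Complex.I) /
      (1 + x * Complex.exp (t * Complex.I)) ^ 2)
    (bound := fun _ => (32:ℝ)) (Metric.ball_mem_nhds z₀ (by norm_num))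
    ?_ ?_ ?_ ?_ ?_ ?_).2
  · filter_upwards [Metric.ball_mem_nhds z₀ (by norm_num : (0:ℝ) < 1/4)] with x hx
    exact (aux_cont_pm (aux_small hz hx)).aestronglyMeasurable
  · exact (integrable_const (8:ℝ)).mono'
      (aux_cont_pm hz34).aestronglyMeasurable
      (Eventually.of_forall fun t => aux_bound_pm hz34 t)
  · exact (aux_cont_k1 hz34).aestronglyMeasurable
  · exact Eventually.of_forall fun t x hx => aux_bound_k1 (aux_small hz hx) t
  · exact integrable_const (32:ℝ)
  · exact Eventually.of_forall fun t x hx => aux_kder (aux_small hz hx) t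

lemma aux_Jder (μ : Measure ℝ) [IsFiniteMeasure μ] {z₀ : ℂ} (hz : ‖z₀‖ < 1/2) :
    HasDerivAt (fun z => ∫ t in Set.Icc 0 (2 * Real.pi),
        -2 * Complex.exp (t * Complex.I) / (1 + z * Complex.exp (t * Complex.I)) ^ 2 ∂μ)
      (∫ t in Set.Icc 0 (2 * Real.pi),
        4 * Complex.exp (t * Complex.I) ^ 2 / (1 + z₀ * Complex.exp (t * Complex.I)) ^ 3 ∂μ)
      z₀ := by
  have hz34 : ‖z₀‖ < 3/4 := by linarith
  have hc2 : Continuous fun t : ℝ => 4 * Complex.exp (t * Complex.I) ^ 2 /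
      (1 + z₀ * Complex.exp (t * Complex.I)) ^ 3 := by
    have hc : Continuous fun t : ℝ => Complex.exp (t * Complex.I) :=
      (Complex.continuous_ofReal.mul continuous_const).cexp
    exact (continuous_const.mul (hc.pow 2)).div
      ((continuous_const.add (continuous_const.mul hc)).pow 3)
      fun t => pow_ne_zero 3 (aux_den_ne hz34 t)
  refine (hasDerivAt_integral_of_dominated_loc_of_deriv_le (s := Metric.ball z₀ (1/4))
    (μ := μ.restrict (Set.Icc 0 (2 * Real.pi))) (x₀ := z₀)
    (F := fun z t => -2 * Complex.exp (t * Complex.I) /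
      (1 + z * Complex.exp (t * Complex.I)) ^ 2)
    (F' := fun x t => 4 * Complex.exp (t * Complex.I) ^ 2 /
      (1 + x * Complex.exp (t * Complex.I)) ^ 3)
    (bound := fun _ => (256:ℝ)) (Metric.ball_mem_nhds z₀ (by norm_num))
    ?_ ?_ ?_ ?_ ?_ ?_).2
  · filter_upwards [Metric.ball_mem_nhds z₀ (by norm_num : (0:ℝ) < 1/4)] with x hx
    exact (aux_cont_k1 (aux_small hz hx)).aestronglyMeasurable
  · exact (integrable_const (32:ℝ)).mono'
      (aux_cont_k1 hz34).aestronglyMeasurable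
      (Eventually.of_forall fun t => aux_bound_k1 hz34 t)
  · exact hc2.aestronglyMeasurable
  · exact Eventually.of_forall fun t x hx => aux_bound_k2 (aux_small hz hx) t
  · exact integrable_const (256:ℝ)
  · exact Eventually.of_forall fun t x hx => aux_k1der (aux_small hz hx) t

lemma aux_int0_k1 (μ : Measure ℝ) [IsFiniteMeasure μ] :
    (∫ t in Set.Icc 0 (2 * Real.pi),
      -2 * Complex.exp (t * Complex.I) / (1 + (0:ℂ) * Complex.exp (t * Complex.I)) ^ 2 ∂μ) =
    ∫ t in Set.Icc 0 (2 * Real.pi), -2 * Complex.exp (t * Complex.I) ∂μ := by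
  refine integral_congr_ae (Eventually.of_forall fun t => ?_)
  norm_num

lemma aux_int0_k2 (μ : Measure ℝ) [IsFiniteMeasure μ] :
    (∫ t in Set.Icc 0 (2 * Real.pi),
      4 * Complex.exp (t * Complex.I) ^ 2 / (1 + (0:ℂ) * Complex.exp (t * Complex.I)) ^ 3 ∂μ) =
    ∫ t in Set.Icc 0 (2 * Real.pi), 4 * Complex.exp (t * Complex.I) ^ 2 ∂μ := by
  refine integral_congr_ae (Eventually.of_forall fun t => ?_)
  norm_num

lemma aux_norm_int_k1 (μ : Measure ℝ) [IsFiniteMeasure μ] :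
    ‖∫ t in Set.Icc 0 (2 * Real.pi), -2 * Complex.exp (t * Complex.I) ∂μ‖ ≤
      2 * (μ (Set.Icc 0 (2 * Real.pi))).toReal := by
  refine norm_setIntegral_le_of_norm_le_const (measure_lt_top μ _) (fun t _ => ?_)
  · rw [norm_mul]
    simp [aux_exp_abs]

lemma aux_norm_int_k2 (μ : Measure ℝ) [IsFiniteMeasure μ] :
    ‖∫ t in Set.Icc 0 (2 * Real.pi), 4 * Complex.exp (t * Complex.I) ^ 2 ∂μ‖ ≤
      4 * (μ (Set.Icc 0 (2 * Real.pi))).toReal := by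
  refine norm_setIntegral_le_of_norm_le_const (measure_lt_top μ _) (fun t _ => ?_)
  · rw [norm_mul, norm_pow]
    simp [aux_exp_abs]

lemma aux_mempm {m : ℝ} {q : ℂ → ℂ} (h : MemPm m q) :
    ‖mc q 1‖ ≤ m ∧ ‖mc q 2‖ ≤ m := by
  obtain ⟨hqa, hq0, μp, μn, hfp, hfn, hsum1, hsumm, hrep⟩ := h
  haveI := hfp
  haveI := hfn
  set Mp := (μp (Set.Icc 0 (2 * Real.pi))).toReal with hMp
  set Mn := (μn (Set.Icc 0 (2 * Real.pi))).toReal with hMn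
  set Ip : ℂ → ℂ := fun z => ∫ t in Set.Icc 0 (2 * Real.pi), pmKernel z t ∂μp with hIp
  set In : ℂ → ℂ := fun z => ∫ t in Set.Icc 0 (2 * Real.pi), pmKernel z t ∂μn with hIn
  have hUnhds : unitDisk ∈ 𝓝 (0:ℂ) := Metric.ball_mem_nhds 0 one_pos
  have hq : q =ᶠ[𝓝 (0:ℂ)] fun z => Ip z - In z := by
    filter_upwards [hUnhds] with z hz using hrep z hz
  have hb12 : Metric.ball (0:ℂ) (1/2) ∈ 𝓝 (0:ℂ) := Metric.ball_mem_nhds 0 (by norm_num)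
  have habs : ∀ z ∈ Metric.ball (0:ℂ) (1/2), ‖z‖ < 1/2 := by
    intro z hz
    rwa [Metric.mem_ball, Complex.dist_eq, sub_zero] at hz
  have h00 : ‖(0:ℂ)‖ < 1/2 := by norm_num
  -- first derivative
  have hd1 : HasDerivAt (fun z => Ip z - In z)
      ((∫ t in Set.Icc 0 (2 * Real.pi), -2 * Complex.exp (t * Complex.I) ∂μp) -
        ∫ t in Set.Icc 0 (2 * Real.pi), -2 * Complex.exp (t * Complex.I) ∂μn) 0 := by
    have := (aux_Ider μp h00).sub (aux_Ider μn h00)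
    rwa [aux_int0_k1 μp, aux_int0_k1 μn] at this
  have hmc1 : ‖mc q 1‖ ≤ 2 * (Mp + Mn) := by
    rw [mc, iteratedDeriv_one, hq.deriv_eq, hd1.deriv]
    have := (norm_sub_le _ _).trans
      (add_le_add (aux_norm_int_k1 μp) (aux_norm_int_k1 μn))
    simp only [Nat.factorial_one, Nat.cast_one, div_one]
    linarith
  -- second derivative
  have hder1 : deriv q =ᶠ[𝓝 (0:ℂ)] fun z =>
      (∫ t in Set.Icc 0 (2 * Real.pi),
        -2 * Complex.exp (t * Complex.I) / (1 + z * Complex.exp (t * Complex.I)) ^ 2 ∂μp) -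
      ∫ t in Set.Icc 0 (2 * Real.pi),
        -2 * Complex.exp (t * Complex.I) / (1 + z * Complex.exp (t * Complex.I)) ^ 2 ∂μn := by
    have h1 := hq.deriv
    filter_upwards [h1, hb12] with z h1z hz
    rw [h1z]
    exact ((aux_Ider μp (habs z hz)).sub (aux_Ider μn (habs z hz))).deriv
  have hd2 : HasDerivAt (fun z =>
      (∫ t in Set.Icc 0 (2 * Real.pi),
        -2 * Complex.exp (t * Complex.I) / (1 + z * Complex.exp (t * Complex.I)) ^ 2 ∂μp) -
      ∫ t in Set.Icc 0 (2 * Real.pi),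
        -2 * Complex.exp (t * Complex.I) / (1 + z * Complex.exp (t * Complex.I)) ^ 2 ∂μn)
      ((∫ t in Set.Icc 0 (2 * Real.pi), 4 * Complex.exp (t * Complex.I) ^ 2 ∂μp) -
        ∫ t in Set.Icc 0 (2 * Real.pi), 4 * Complex.exp (t * Complex.I) ^ 2 ∂μn) 0 := by
    have := (aux_Jder μp h00).sub (aux_Jder μn h00)
    rwa [aux_int0_k2 μp, aux_int0_k2 μn] at this
  have hmc2 : ‖mc q 2‖ ≤ 2 * (Mp + Mn) := by
    rw [mc, iteratedDeriv_succ, iteratedDeriv_one, hder1.deriv_eq, hd2.deriv]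
    have := (norm_sub_le _ _).trans
      (add_le_add (aux_norm_int_k2 μp) (aux_norm_int_k2 μn))
    have h2 : (Nat.factorial 2 : ℂ) = 2 := by norm_num [Nat.factorial]
    rw [h2]
    rw [norm_div]
    have : ‖((∫ t in Set.Icc 0 (2 * Real.pi), 4 * Complex.exp (t * Complex.I) ^ 2 ∂μp) -
        ∫ t in Set.Icc 0 (2 * Real.pi), 4 * Complex.exp (t * Complex.I) ^ 2 ∂μn)‖ ≤
        4 * (Mp + Mn) := by linarith
    have hn2 : ‖(2:ℂ)‖ = 2 := by
      norm_num
    rw [hn2]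
    linarith [this]
  have hMsum : Mp + Mn ≤ m / 2 := hsumm
  exact ⟨hmc1.trans (by linarith), hmc2.trans (by linarith)⟩

lemma aux_pm_bound {m β : ℝ} {p : ℂ → ℂ} (hβ1 : β < 1) (h : MemPmBeta m β p) :
    ‖mc p 1‖ ≤ m * (1 - β) ∧ ‖mc p 2‖ ≤ m * (1 - β) := by
  obtain ⟨q, hq, hpq⟩ := h
  have hqa : AnalyticOnNhd ℂ q unitDisk := hq.1
  have h0u : (0:ℂ) ∈ unitDisk := by simp [unitDisk, Metric.mem_ball]
  have hUnhds : unitDisk ∈ 𝓝 (0:ℂ) := Metric.ball_mem_nhds 0 one_pos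
  have hpe : p =ᶠ[𝓝 (0:ℂ)] fun z => (β:ℂ) + (1 - (β:ℂ)) * q z := by
    filter_upwards [hUnhds] with z hz using hpq z hz
  have hds : ∀ᶠ z in 𝓝 (0:ℂ), HasDerivAt (fun z => (β:ℂ) + (1 - (β:ℂ)) * q z)
      ((1 - (β:ℂ)) * deriv q z) z := by
    filter_upwards [hUnhds] with z hz
    exact (((hqa z hz).differentiableAt.hasDerivAt).const_mul (1 - (β:ℂ))).const_add (β:ℂ)
  have hmc1 : mc p 1 = (1 - (β:ℂ)) * mc q 1 := by
    rw [aux_mc_congr hpe 1, mc, mc, iteratedDeriv_one, iteratedDeriv_one,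
      hds.self_of_nhds.deriv]
    simp
  have hds2 : HasDerivAt (fun z => (1 - (β:ℂ)) * deriv q z)
      ((1 - (β:ℂ)) * deriv (deriv q) 0) 0 :=
    ((hqa.deriv 0 h0u).differentiableAt.hasDerivAt).const_mul (1 - (β:ℂ))
  have hmc2 : mc p 2 = (1 - (β:ℂ)) * mc q 2 := by
    have e1 : deriv (fun z => (β:ℂ) + (1 - (β:ℂ)) * q z) =ᶠ[𝓝 (0:ℂ)]
        fun z => (1 - (β:ℂ)) * deriv q z := by
      filter_upwards [hds] with z hz using hz.deriv
    rw [aux_mc_congr hpe 2, mc, mc, iteratedDeriv_succ, iteratedDeriv_one,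
      iteratedDeriv_succ, iteratedDeriv_one, e1.deriv_eq, hds2.deriv]
    ring
  obtain ⟨hb1, hb2⟩ := aux_mempm hq
  have habs : ‖1 - (β:ℂ)‖ = 1 - β := by
    rw [show (1 : ℂ) - (β:ℂ) = ((1 - β : ℝ) : ℂ) by push_cast; ring, Complex.norm_real, Real.norm_eq_abs,
      abs_of_pos (by linarith)]
  constructor
  · rw [hmc1, norm_mul, habs]
    calc (1 - β) * ‖mc q 1‖ ≤ (1 - β) * m := by
          apply mul_le_mul_of_nonneg_left hb1 (by linarith)
      _ = m * (1 - β) := by ring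
  · rw [hmc2, norm_mul, habs]
    calc (1 - β) * ‖mc q 2‖ ≤ (1 - β) * m := by
          apply mul_le_mul_of_nonneg_left hb2 (by linarith)
      _ = m * (1 - β) := by ring

lemma aux_inverse_mc {f g : ℂ → ℂ} (h : BiUnivalentPair f g) :
    mc g 2 = - mc f 2 ∧ mc g 3 = 2 * mc f 2 ^ 2 - mc f 3 := by
  obtain ⟨hfa, hf0, hfd, -, hga, -, hg0, hfg⟩ := h
  have h0u : (0:ℂ) ∈ unitDisk := by simp [unitDisk]
  have hUnhds : unitDisk ∈ 𝓝 (0:ℂ) := Metric.ball_mem_nhds 0 one_pos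
  -- eventually g w ∈ unitDisk
  have hgc : ContinuousAt g 0 := (hga 0 h0u).continuousAt
  have hgin : ∀ᶠ w in 𝓝 (0:ℂ), g w ∈ unitDisk := by
    have : unitDisk ∈ 𝓝 (g 0) := by rw [hg0]; exact hUnhds
    exact hgc.preimage_mem_nhds this
  have hU : ∀ᶠ w in 𝓝 (0:ℂ), w ∈ unitDisk := hUnhds
  have E1 : (fun w => f (g w)) =ᶠ[𝓝 (0:ℂ)] fun w => w := by
    have hsm : ∀ᶠ w in 𝓝 (0:ℂ), ‖w‖ < 1 / 4 := by
      have : Metric.ball (0:ℂ) (1/4) ∈ 𝓝 (0:ℂ) := Metric.ball_mem_nhds 0 (by norm_num)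
      filter_upwards [this] with w hw
      simpa [Metric.mem_ball, Complex.dist_eq] using hw
    filter_upwards [hsm] with w hw using hfg w hw
  -- analyticity of derivatives
  have hfa1 : AnalyticOnNhd ℂ (deriv f) unitDisk := hfa.deriv
  have hfa2 : AnalyticOnNhd ℂ (deriv (deriv f)) unitDisk := hfa1.deriv
  have hfa3 : AnalyticOnNhd ℂ (deriv (deriv (deriv f))) unitDisk := hfa2.deriv
  have hga1 : AnalyticOnNhd ℂ (deriv g) unitDisk := hga.deriv
  have hga2 : AnalyticOnNhd ℂ (deriv (deriv g)) unitDisk := hga1.deriv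
  have hga3 : AnalyticOnNhd ℂ (deriv (deriv (deriv g))) unitDisk := hga2.deriv
  -- first relation
  have E2 : ∀ᶠ w in 𝓝 (0:ℂ), deriv f (g w) * deriv g w = 1 := by
    have hd := E1.deriv
    filter_upwards [hd, hgin, hU] with w hw hgw hwU
    have c1 : HasDerivAt g (deriv g w) w := (hga w hwU).differentiableAt.hasDerivAt
    have c2 : HasDerivAt f (deriv f (g w)) (g w) := (hfa _ hgw).differentiableAt.hasDerivAt
    have c3 : HasDerivAt (fun w => f (g w)) (deriv f (g w) * deriv g w) w := c2.comp w c1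
    rw [← c3.deriv, hw, deriv_id'']
  have hdg0 : deriv g 0 = 1 := by
    have := E2.self_of_nhds
    rw [hg0, hfd, one_mul] at this
    exact this
  -- second relation
  have E3 : ∀ᶠ w in 𝓝 (0:ℂ),
      deriv (deriv f) (g w) * deriv g w * deriv g w + deriv f (g w) * deriv (deriv g) w
        = 0 := by
    have E2' : (fun w => deriv f (g w) * deriv g w) =ᶠ[𝓝 (0:ℂ)] fun _ => (1:ℂ) := E2
    have hd := E2'.deriv  -- deriv of LHS =ᶠ deriv of const 1
    filter_upwards [hd, hgin, hU] with w hw hgw hwU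
    have c1 : HasDerivAt g (deriv g w) w := (hga w hwU).differentiableAt.hasDerivAt
    have c4 : HasDerivAt (deriv g) (deriv (deriv g) w) w :=
      (hga1 w hwU).differentiableAt.hasDerivAt
    have c5 : HasDerivAt (fun w => deriv f (g w)) (deriv (deriv f) (g w) * deriv g w) w :=
      HasDerivAt.comp w ((hfa1 _ hgw).differentiableAt.hasDerivAt) c1
    have c6 : HasDerivAt (fun w => deriv f (g w) * deriv g w)
        (deriv (deriv f) (g w) * deriv g w * deriv g w + deriv f (g w) * deriv (deriv g) w)
        w := c5.mul c4
    rw [← c6.deriv, hw, deriv_const]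
  have hddg0 : deriv (deriv g) 0 = - deriv (deriv f) 0 := by
    have := E3.self_of_nhds
    rw [hg0, hfd, hdg0] at this
    linear_combination this
  -- third relation
  have E4 : deriv (deriv (deriv g)) 0 =
      3 * deriv (deriv f) 0 ^ 2 - deriv (deriv (deriv f)) 0 := by
    have E3' : (fun w => deriv (deriv f) (g w) * deriv g w * deriv g w +
        deriv f (g w) * deriv (deriv g) w) =ᶠ[𝓝 (0:ℂ)] fun _ => (0:ℂ) := E3
    have hd := E3'.deriv
    have hzero := hd.self_of_nhds
    rw [deriv_const] at hzero
    -- compute deriv of LHS of E3 at 0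
    have c1 : HasDerivAt g (deriv g 0) 0 := (hga 0 h0u).differentiableAt.hasDerivAt
    have hg0u : g 0 ∈ unitDisk := by rw [hg0]; exact h0u
    have c4 : HasDerivAt (deriv g) (deriv (deriv g) 0) 0 :=
      (hga1 0 h0u).differentiableAt.hasDerivAt
    have c7 : HasDerivAt (deriv (deriv g)) (deriv (deriv (deriv g)) 0) 0 :=
      (hga2 0 h0u).differentiableAt.hasDerivAt
    have c5 : HasDerivAt (fun w => deriv f (g w)) (deriv (deriv f) (g 0) * deriv g 0) 0 :=
      HasDerivAt.comp 0 ((hfa1 _ hg0u).differentiableAt.hasDerivAt) c1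
    have c8 : HasDerivAt (fun w => deriv (deriv f) (g w))
        (deriv (deriv (deriv f)) (g 0) * deriv g 0) 0 :=
      HasDerivAt.comp 0 ((hfa2 _ hg0u).differentiableAt.hasDerivAt) c1
    have big : HasDerivAt (fun w =>
        deriv (deriv f) (g w) * deriv g w * deriv g w + deriv f (g w) * deriv (deriv g) w)
      ((deriv (deriv (deriv f)) (g 0) * deriv g 0 * deriv g 0 +
          deriv (deriv f) (g 0) * deriv (deriv g) 0) * deriv g 0 +
        deriv (deriv f) (g 0) * deriv g 0 * deriv (deriv g) 0 +
        ((deriv (deriv f) (g 0) * deriv g 0) * deriv (deriv g) 0 +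
          deriv f (g 0) * deriv (deriv (deriv g)) 0)) 0 := ((c8.mul c4).mul c4).add (c5.mul c7)
    have e5 := big.deriv
    rw [hzero] at e5
    rw [hg0, hfd, hdg0, hddg0] at e5
    linear_combination - e5
  -- conclude
  have i2f : iteratedDeriv 2 f = deriv (deriv f) := by rw [iteratedDeriv_succ, iteratedDeriv_one]
  have i3f : iteratedDeriv 3 f = deriv (deriv (deriv f)) := by rw [iteratedDeriv_succ, i2f]
  have i2g : iteratedDeriv 2 g = deriv (deriv g) := by rw [iteratedDeriv_succ, iteratedDeriv_one]
  have i3g : iteratedDeriv 3 g = deriv (deriv (deriv g)) := by rw [iteratedDeriv_succ, i2g]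
  constructor
  · rw [mc, mc, i2f, i2g, hddg0]
    ring
  · rw [mc, mc, mc, i3g, i2f, i3f, E4]
    have h2 : (Nat.factorial 2 : ℂ) = 2 := by norm_num [Nat.factorial]
    have h3 : (Nat.factorial 3 : ℂ) = 6 := by norm_num [Nat.factorial]
    rw [h2, h3]
    ring

/-- MacLaurin coefficients of the Hadamard convolution `f ∗ k`. -/
def hadCoeff (f k : ℂ → ℂ) (n : ℕ) : ℂ :=
  if n = 0 then 0 else if n = 1 then 1 else mc f n * mc k n

/-- The Hadamard convolution `F(z) = (f ∗ k)(z) = z + ∑_{n≥2} a_n k_n z^n`. -/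
def hadFun (f k : ℂ → ℂ) (z : ℂ) : ℂ := ∑' n : ℕ, hadCoeff f k n * z ^ n

/-- The expression `(1-α) z F'(z)/F(z) + α (1 + z F''(z)/F'(z))`, extended by `1` at the
origin. -/
def bvOp (α : ℂ) (F : ℂ → ℂ) (z : ℂ) : ℂ :=
  if z = 0 then 1
  else (1 - α) * (z * deriv F z / F z) + α * (1 + z * deriv (deriv F) z / deriv F z)

lemma aux_bv_mc (α : ℂ) {c : ℕ → ℂ} (h0 : c 0 = 0) (h1 : c 1 = 1)
    (hs : ∀ z ∈ Metric.ball (0:ℂ) 1, Summable fun n => c n * z ^ n) :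
    mc (bvOp α fun z => ∑' n, c n * z ^ n) 1 = (1 + α) * c 2 ∧
    mc (bvOp α fun z => ∑' n, c n * z ^ n) 2 =
      2 * (1 + 2 * α) * c 3 - (1 + 3 * α) * c 2 ^ 2 := by
  set F : ℂ → ℂ := fun z => ∑' n, c n * z ^ n with hFdef
  have hF : HasFPowerSeriesOnBall F (FormalMultilinearSeries.ofScalars ℂ c) 0 1 :=
    aux_hasFPS hs
  -- the shifted series E
  have hsE : ∀ z ∈ Metric.ball (0:ℂ) 1, Summable fun n => c (n + 1) * z ^ n := by
    intro z hz
    rcases eq_or_ne z 0 with rfl | hz0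
    · apply summable_of_ne_finset_zero (s := {0})
      intro n hn
      simp only [Finset.mem_singleton] at hn
      rw [zero_pow hn, mul_zero]
    · have h2 : Summable fun n => c (n + 1) * z ^ (n + 1) :=
        (hs z hz).comp_injective fun a b hab => Nat.succ_injective hab
      have h3 := h2.mul_left z⁻¹
      refine h3.congr fun n => ?_
      field_simp
      ring
  set E : ℂ → ℂ := fun z => ∑' n, c (n + 1) * z ^ n with hEdef
  have hE : HasFPowerSeriesOnBall E
      (FormalMultilinearSeries.ofScalars ℂ fun n => c (n + 1)) 0 1 := aux_hasFPS hsE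
  -- analyticity
  have hFA : AnalyticOnNhd ℂ F (Metric.ball (0:ℂ) 1) := aux_eball ▸ hF.analyticOnNhd
  have hEA : AnalyticOnNhd ℂ E (Metric.ball (0:ℂ) 1) := aux_eball ▸ hE.analyticOnNhd
  have hA1 : AnalyticOnNhd ℂ (deriv F) (Metric.ball (0:ℂ) 1) := hFA.deriv
  have hA2 : AnalyticOnNhd ℂ (deriv (deriv F)) (Metric.ball (0:ℂ) 1) := hA1.deriv
  have hA3 : AnalyticOnNhd ℂ (deriv (deriv (deriv F))) (Metric.ball (0:ℂ) 1) := hA2.deriv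
  have hB1 : AnalyticOnNhd ℂ (deriv E) (Metric.ball (0:ℂ) 1) := hEA.deriv
  have h0b : (0:ℂ) ∈ Metric.ball (0:ℂ) 1 := by simp
  -- derivative values at 0
  have i1 : iteratedDeriv 1 F = deriv F := iteratedDeriv_one
  have i2 : iteratedDeriv 2 F = deriv (deriv F) := by
    rw [iteratedDeriv_succ, i1]
  have i3 : iteratedDeriv 3 F = deriv (deriv (deriv F)) := by
    rw [iteratedDeriv_succ, i2]
  have j1 : iteratedDeriv 1 E = deriv E := iteratedDeriv_one
  have j2 : iteratedDeriv 2 E = deriv (deriv E) := by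
    rw [iteratedDeriv_succ, j1]
  have hdF0 : deriv F 0 = 1 := by
    have := aux_iteratedDeriv hF 1
    rw [i1, aux_ofScalars_coeff] at this
    simp [this, h1]
  have hddF0 : deriv (deriv F) 0 = 2 * c 2 := by
    have := aux_iteratedDeriv hF 2
    rw [i2, aux_ofScalars_coeff] at this
    norm_num [this]
  have hdddF0 : deriv (deriv (deriv F)) 0 = 6 * c 3 := by
    have := aux_iteratedDeriv hF 3
    rw [i3, aux_ofScalars_coeff] at this
    rw [this]
    norm_num [Nat.factorial]
  have hE0 : E 0 = 1 := by
    have := aux_iteratedDeriv hE 0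
    rw [iteratedDeriv_zero, aux_ofScalars_coeff] at this
    simp [this, h1]
  have hdE0 : deriv E 0 = c 2 := by
    have := aux_iteratedDeriv hE 1
    rw [j1, aux_ofScalars_coeff] at this
    simp [this]
  have hddE0 : deriv (deriv E) 0 = 2 * c 3 := by
    have := aux_iteratedDeriv hE 2
    rw [j2, aux_ofScalars_coeff] at this
    norm_num [this]
  -- F z = z * E z on the ball
  have hFzE : ∀ z ∈ Metric.ball (0:ℂ) 1, F z = z * E z := by
    intro z hz
    have e1 : F z = c 0 * z ^ 0 + ∑' n, c (n + 1) * z ^ (n + 1) :=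
      Summable.tsum_eq_zero_add (hs z hz)
    rw [h0, zero_mul, zero_add] at e1
    rw [e1, hEdef]
    rw [← tsum_mul_left]
    exact tsum_congr fun n => by ring
  -- the regularized function h
  set h : ℂ → ℂ := fun z =>
    (1 - α) * (deriv F z / E z) + α * (1 + z * deriv (deriv F) z / deriv F z) with hhdef
  have hball : Metric.ball (0:ℂ) 1 ∈ 𝓝 (0:ℂ) := Metric.ball_mem_nhds 0 one_pos
  have heq : bvOp α F =ᶠ[𝓝 (0:ℂ)] h := by
    filter_upwards [hball] with z hz
    rcases eq_or_ne z 0 with rfl | hz0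
    · have hb0 : bvOp α F 0 = 1 := by simp [bvOp]
      have hh0 : h 0 = 1 := by
        simp only [hhdef]
        rw [hdF0, hE0]
        norm_num
      rw [hb0, hh0]
    · simp only [bvOp, if_neg hz0, hhdef]
      rw [hFzE z hz, mul_div_mul_left _ _ hz0]
  -- eventual facts
  have hEne : ∀ᶠ z in 𝓝 (0:ℂ), E z ≠ 0 := by
    have : ContinuousAt E 0 := (hEA 0 h0b).continuousAt
    exact this.eventually_ne (by rw [hE0]; exact one_ne_zero)
  have hdFne : ∀ᶠ z in 𝓝 (0:ℂ), deriv F z ≠ 0 := by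
    have : ContinuousAt (deriv F) 0 := (hA1 0 h0b).continuousAt
    exact this.eventually_ne (by rw [hdF0]; exact one_ne_zero)
  -- first derivative of h, as an eventual HasDerivAt
  have hder : ∀ᶠ z in 𝓝 (0:ℂ), HasDerivAt h
      ((1 - α) * ((deriv (deriv F) z * E z - deriv F z * deriv E z) / E z ^ 2) +
        α * (0 + ((1 * deriv (deriv F) z + z * deriv (deriv (deriv F)) z) * deriv F z -
          z * deriv (deriv F) z * deriv (deriv F) z) / deriv F z ^ 2)) z := by
    filter_upwards [hball, hEne, hdFne] with z hz hEz hdFz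
    have d1 : HasDerivAt (deriv F) (deriv (deriv F) z) z :=
      (hA1 z hz).differentiableAt.hasDerivAt
    have d2 : HasDerivAt (deriv (deriv F)) (deriv (deriv (deriv F)) z) z :=
      (hA2 z hz).differentiableAt.hasDerivAt
    have dE1 : HasDerivAt E (deriv E z) z := (hEA z hz).differentiableAt.hasDerivAt
    have t1 := d1.div dE1 hEz
    have t2 := ((hasDerivAt_id z).mul d2).div d1 hdFz
    have t3 := (hasDerivAt_const z (1:ℂ)).add t2
    exact (t1.const_mul (1 - α)).add (t3.const_mul α)
  have hmc1 : mc (bvOp α F) 1 = (1 + α) * c 2 := by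
    rw [aux_mc_congr heq 1, mc, iteratedDeriv_one, hder.self_of_nhds.deriv]
    rw [hdF0, hddF0, hE0, hdE0]
    norm_num
    ring
  refine ⟨hmc1, ?_⟩
  -- second derivative
  have e1 : deriv h =ᶠ[𝓝 (0:ℂ)] fun z =>
      (1 - α) * ((deriv (deriv F) z * E z - deriv F z * deriv E z) / E z ^ 2) +
        α * (0 + ((1 * deriv (deriv F) z + z * deriv (deriv (deriv F)) z) * deriv F z -
          z * deriv (deriv F) z * deriv (deriv F) z) / deriv F z ^ 2) := by
    filter_upwards [hder] with z hz using hz.deriv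
  have d1 : HasDerivAt (deriv F) (deriv (deriv F) 0) 0 :=
    (hA1 0 h0b).differentiableAt.hasDerivAt
  have d2 : HasDerivAt (deriv (deriv F)) (deriv (deriv (deriv F)) 0) 0 :=
    (hA2 0 h0b).differentiableAt.hasDerivAt
  have d3 : HasDerivAt (deriv (deriv (deriv F))) (deriv (deriv (deriv (deriv F))) 0) 0 :=
    (hA3 0 h0b).differentiableAt.hasDerivAt
  have dE1 : HasDerivAt E (deriv E 0) 0 := (hEA 0 h0b).differentiableAt.hasDerivAt
  have dE2 : HasDerivAt (deriv E) (deriv (deriv E) 0) 0 :=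
    (hB1 0 h0b).differentiableAt.hasDerivAt
  have hEsqne : E 0 ^ 2 ≠ 0 := by rw [hE0]; norm_num
  have hFsqne : deriv F 0 ^ 2 ≠ 0 := by rw [hdF0]; norm_num
  have q1 := ((d2.mul dE1).sub (d1.mul dE2)).div (dE1.pow 2) hEsqne
  have m3 := (d2.const_mul (1:ℂ)).add ((hasDerivAt_id (0:ℂ)).mul d3)
  have m5 := ((hasDerivAt_id (0:ℂ)).mul d2).mul d2
  have q2 := ((m3.mul d1).sub m5).div (d1.pow 2) hFsqne
  have R := (q1.const_mul (1 - α)).add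
    (((hasDerivAt_const (0:ℂ) (0:ℂ)).add q2).const_mul α)
  have e3 : deriv (fun z =>
      (1 - α) * ((deriv (deriv F) z * E z - deriv F z * deriv E z) / E z ^ 2) +
        α * (0 + ((1 * deriv (deriv F) z + z * deriv (deriv (deriv F)) z) * deriv F z -
          z * deriv (deriv F) z * deriv (deriv F) z) / deriv F z ^ 2)) 0 = _ := R.deriv
  rw [aux_mc_congr heq 2, mc, iteratedDeriv_succ, iteratedDeriv_one,
    e1.deriv_eq, e3]
  rw [hdF0, hddF0, hdddF0, hE0, hdE0, hddE0]
  norm_num [Nat.factorial]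
  simp only [hdF0, hddF0, hE0, hdE0]
  ring

/-- `f ∈ BV^k(m; α, β)`: `f` is bi-univalent with inverse `g`, the convolutions
`F = f ∗ k` and `G = g ∗ k` converge on the unit disk, do not vanish on the punctured disk,
have non-vanishing derivative on the disk, and both
`(1-α) z F'/F + α (1 + z F''/F')` and `(1-α) w G'/G + α (1 + w G''/G')` belong to
`P_m(β)`. -/
def MemBV (m β : ℝ) (α : ℂ) (k f g : ℂ → ℂ) : Prop :=
  BiUnivalentPair f g ∧
  (∀ z ∈ unitDisk, Summable fun n : ℕ => hadCoeff f k n * z ^ n) ∧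
  (∀ w ∈ unitDisk, Summable fun n : ℕ => hadCoeff g k n * w ^ n) ∧
  (∀ z ∈ unitDisk, z ≠ 0 → hadFun f k z ≠ 0) ∧
  (∀ w ∈ unitDisk, w ≠ 0 → hadFun g k w ≠ 0) ∧
  (∀ z ∈ unitDisk, deriv (hadFun f k) z ≠ 0) ∧
  (∀ w ∈ unitDisk, deriv (hadFun g k) w ≠ 0) ∧
  MemPmBeta m β (bvOp α (hadFun f k)) ∧ MemPmBeta m β (bvOp α (hadFun g k))

/-- Theorem 2.2, bound for `|a₂|` in the class `BV^k(m; α, β)`. -/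
theorem BV_a2_bound (m β : ℝ) (hm : 2 ≤ m) (hβ0 : 0 ≤ β) (hβ1 : β < 1)
    (α : ℂ) (hα : α ≠ -1)
    (k kinv f g : ℂ → ℂ) (hk : BiUnivalentPair k kinv)
    (hk2 : mc k 2 ≠ 0) (hk3 : mc k 3 ≠ 0)
    (hD : 2 * (1 + 2 * α) * mc k 3 - (1 + 3 * α) * mc k 2 ^ 2 ≠ 0)
    (hf : MemBV m β α k f g) :
    ‖mc f 2‖ ≤
      min
        (Real.sqrt (m * (1 - β) /
          ‖2 * (1 + 2 * α) * mc k 3 - (1 + 3 * α) * mc k 2 ^ 2‖))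
        (m * (1 - β) / (‖1 + α‖ * ‖mc k 2‖)) := by
  obtain ⟨hpair, hsF, hsG, -, -, -, -, hPm, hQm⟩ := hf
  -- coefficients of the convolutions
  have hA0 : hadCoeff f k 0 = 0 := rfl
  have hA1 : hadCoeff f k 1 = 1 := rfl
  have hA2 : hadCoeff f k 2 = mc f 2 * mc k 2 := rfl
  have hA3 : hadCoeff f k 3 = mc f 3 * mc k 3 := rfl
  have hB0 : hadCoeff g k 0 = 0 := rfl
  have hB1 : hadCoeff g k 1 = 1 := rfl
  have hB2 : hadCoeff g k 2 = mc g 2 * mc k 2 := rfl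
  have hB3 : hadCoeff g k 3 = mc g 3 * mc k 3 := rfl
  have hbvf := aux_bv_mc α hA0 hA1 hsF
  have hbvg := aux_bv_mc α hB0 hB1 hsG
  have heF : bvOp α (hadFun f k) = bvOp α fun z => ∑' n : ℕ, hadCoeff f k n * z ^ n := rfl
  have heG : bvOp α (hadFun g k) = bvOp α fun z => ∑' n : ℕ, hadCoeff g k n * z ^ n := rfl
  obtain ⟨hp1, hp2⟩ := aux_pm_bound hβ1 hPm
  obtain ⟨hq1, hq2⟩ := aux_pm_bound hβ1 hQm
  rw [heF, hbvf.1] at hp1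
  rw [heF, hbvf.2] at hp2
  rw [heG, hbvg.2] at hq2
  rw [hA2] at hp1
  rw [hA2, hA3] at hp2
  rw [hB2, hB3] at hq2
  obtain ⟨hg2, hg3⟩ := aux_inverse_mc hpair
  -- basic positivity
  have h1α : (1 : ℂ) + α ≠ 0 := fun h => hα (by linear_combination h)
  have hpos1 : 0 < ‖1 + α‖ := norm_pos_iff.mpr h1α
  have hpos2 : 0 < ‖mc k 2‖ := norm_pos_iff.mpr hk2
  have hposD : 0 < ‖2 * (1 + 2 * α) * mc k 3 - (1 + 3 * α) * mc k 2 ^ 2‖ :=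
    norm_pos_iff.mpr hD
  have hmb : 0 ≤ m * (1 - β) := mul_nonneg (by linarith) (by linarith)
  refine le_min ?_ ?_
  · -- sqrt bound
    have key : 2 * (1 + 2 * α) * (mc f 3 * mc k 3) - (1 + 3 * α) * (mc f 2 * mc k 2) ^ 2 +
        (2 * (1 + 2 * α) * (mc g 3 * mc k 3) - (1 + 3 * α) * (mc g 2 * mc k 2) ^ 2) =
        2 * mc f 2 ^ 2 * (2 * (1 + 2 * α) * mc k 3 - (1 + 3 * α) * mc k 2 ^ 2) := by
      rw [hg2, hg3]
      ring
    have habs : ‖2 * mc f 2 ^ 2 * (2 * (1 + 2 * α) * mc k 3 -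
        (1 + 3 * α) * mc k 2 ^ 2)‖ ≤ 2 * (m * (1 - β)) := by
      rw [← key]
      calc ‖_‖ ≤
          ‖2 * (1 + 2 * α) * (mc f 3 * mc k 3) -
            (1 + 3 * α) * (mc f 2 * mc k 2) ^ 2‖ +
          ‖2 * (1 + 2 * α) * (mc g 3 * mc k 3) -
            (1 + 3 * α) * (mc g 2 * mc k 2) ^ 2‖ := norm_add_le _ _
        _ ≤ 2 * (m * (1 - β)) := by linarith
    rw [norm_mul, norm_mul, Complex.norm_two, norm_pow] at habs
    refine (Real.le_sqrt (norm_nonneg _) ?_).mpr ?_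
    · exact div_nonneg hmb hposD.le
    · rw [le_div_iff₀ hposD]
      nlinarith [habs]
  · -- linear bound
    rw [norm_mul, norm_mul] at hp1
    rw [le_div_iff₀ (mul_pos hpos1 hpos2)]
    calc ‖mc f 2‖ * (‖1 + α‖ * ‖mc k 2‖) =
        ‖1 + α‖ * (‖mc f 2‖ * ‖mc k 2‖) := by ring
      _ ≤ m * (1 - β) := hp1
end
end
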